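/- For r = 5, the rational number s defined by binom(i+1,2)·s + (i+1) = binom(5+i, i) is an integer if and only if i is congruent to one of 1, 2, 7, 11, 13, 17, 22, 23, 26, 31, 37, 38, 41, 43, 46, 47, 53, 58 modulo 60. -/
import Mathlib

lemma aux_choose5 (i : ℕ) :
    ((5 + i).choose i : ℤ) * 120 = (i+1)*(i+2)*(i+3)*(i+4)*(i+5) := by
  have hsymm : (5 + i).choose i = (i + 5).choose 5 := by
    have h1 := Nat.choose_symm (n := 5 + i) (k := 5) (by omega)
    rw [Nat.add_sub_cancel_left] at h1
    rw [Nat.add_comm i 5]; exact h1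
  have h := Nat.ascFactorial_eq_factorial_mul_choose i 5
  have hasc : (i+1).ascFactorial 5 = (i+1)*(i+2)*(i+3)*(i+4)*(i+5) := by
    rw [show (5:ℕ) = Nat.succ 4 from rfl, Nat.ascFactorial_succ,
      show (4:ℕ) = Nat.succ 3 from rfl, Nat.ascFactorial_succ,
      show (3:ℕ) = Nat.succ 2 from rfl, Nat.ascFactorial_succ,
      show (2:ℕ) = Nat.succ 1 from rfl, Nat.ascFactorial_succ,
      show (1:ℕ) = Nat.succ 0 from rfl, Nat.ascFactorial_succ,
      Nat.ascFactorial_zero]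
    ring
  rw [hasc, show Nat.factorial 5 = 120 from rfl] at h
  rw [hsymm]
  have := congrArg (Nat.cast : ℕ → ℤ) h
  push_cast at this
  linarith [this]

lemma aux_choose2 (i : ℕ) :
    (((i+1)).choose 2 : ℤ) * 2 = (i+1) * i := by
  have hd : 2 ∣ (i+1) * i := by
    rw [Nat.mul_comm]; exact (Nat.even_mul_succ_self i).two_dvd
  have h : (i+1).choose 2 * 2 = (i+1) * i := by
    rw [Nat.choose_two_right, Nat.add_sub_cancel]
    exact Nat.div_mul_cancel hd
  exact_mod_cast congrArg (Nat.cast : ℕ → ℤ) h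

theorem stmt_3 (i : ℕ) (hi : 1 ≤ i) :
    (∃ s : ℤ, ((i + 1).choose 2 : ℤ) * s + (i + 1) = ((5 + i).choose i : ℤ)) ↔
      (i % 60 = 1 ∨ i % 60 = 2 ∨ i % 60 = 7 ∨ i % 60 = 11 ∨ i % 60 = 13 ∨
       i % 60 = 17 ∨ i % 60 = 22 ∨ i % 60 = 23 ∨ i % 60 = 26 ∨ i % 60 = 31 ∨
       i % 60 = 37 ∨ i % 60 = 38 ∨ i % 60 = 41 ∨ i % 60 = 43 ∨ i % 60 = 46 ∨
       i % 60 = 47 ∨ i % 60 = 53 ∨ i % 60 = 58) := by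
  have hn1 : (1:ℤ) ≤ (i:ℤ) := by exact_mod_cast hi
  have h2 := aux_choose2 i
  have h5 := aux_choose5 i
  have key : (∃ s : ℤ, ((i + 1).choose 2 : ℤ) * s + (i + 1) = ((5 + i).choose i : ℤ)) ↔
      (60 : ℤ) ∣ ((i:ℤ)^3 + 14*(i:ℤ)^2 + 71*(i:ℤ) + 154) := by
    constructor
    · rintro ⟨s, hs⟩
      refine ⟨s, ?_⟩
      have hne : ((i:ℤ) * ((i:ℤ)+1)) ≠ 0 := by nlinarith
      have h120 : ((i:ℤ) * ((i:ℤ)+1)) * ((i:ℤ)^3 + 14*(i:ℤ)^2 + 71*(i:ℤ) + 154)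
          = ((i:ℤ) * ((i:ℤ)+1)) * (60 * s) := by
        linear_combination -120 * hs + 60 * s * h2 - h5
      exact mul_left_cancel₀ hne h120
    · rintro ⟨k, hk⟩
      refine ⟨k, ?_⟩
      have h120 : (((i + 1).choose 2 : ℤ) * k + ((i:ℤ) + 1)) * 120
          = ((5 + i).choose i : ℤ) * 120 := by
        linear_combination 60 * k * h2 - h5 - ((i:ℤ)*((i:ℤ)+1)) * hk
      have := mul_right_cancel₀ (b := (120:ℤ)) (by norm_num) h120
      push_cast at this ⊢
      linarith [this]
  rw [key, show ((60:ℤ) ∣ ((i:ℤ)^3 + 14*(i:ℤ)^2 + 71*(i:ℤ) + 154)) ↔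
      (((i:ℤ)^3 + 14*(i:ℤ)^2 + 71*(i:ℤ) + 154 : ℤ) : ZMod 60) = 0 from
      (ZMod.intCast_zmod_eq_zero_iff_dvd _ 60).symm]
  have hcast : (((i:ℤ)^3 + 14*(i:ℤ)^2 + 71*(i:ℤ) + 154 : ℤ) : ZMod 60)
      = ((i % 60 : ℕ) : ZMod 60)^3 + 14*((i % 60 : ℕ) : ZMod 60)^2
        + 71*((i % 60 : ℕ) : ZMod 60) + 154 := by
    rw [ZMod.natCast_mod]
    push_cast
    ring
  rw [hcast]
  have hlt : i % 60 < 60 := Nat.mod_lt _ (by norm_num)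
  set r := i % 60 with hr
  clear_value r
  clear hr key hcast h2 h5 hn1 hi
  interval_cases r <;> decide
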